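/- arXiv:2312.07518 — 6 statements merged into one kernel-verified Lean document; each statement's English description precedes it below -/
import Mathlib

section
/- Let g : Fin 2 → Fin 2 → Fin 2 → ℝ be a completely symmetric 3-tensor (m = 3, n = 2). Define G : Fin 2 → Fin 2 → ℝ by G i j = ∑_{σ,τ ∈ S₂} sign σ · sign τ · g i (σ 0) (τ 0) · g j (σ 1) (τ 1). Then G is symmetric: G i j = G j i. -/
def psgn {k : ℕ} (σ : Equiv.Perm (Fin k)) : ℝ := ((Equiv.Perm.sign σ : ℤ) : ℝ)

theorem stmt2 (g : Fin 2 → Fin 2 → Fin 2 → ℝ)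
    (hsym : ∀ i j k, g i j k = g j i k ∧ g i j k = g i k j)
    (G : Fin 2 → Fin 2 → ℝ)
    (hG : ∀ i j, G i j =
      ∑ σ : Equiv.Perm (Fin 2), ∑ τ : Equiv.Perm (Fin 2),
        psgn σ * psgn τ * (g i (σ 0) (τ 0) * g j (σ 1) (τ 1))) :
    ∀ i j, G i j = G j i := by
  intro i j
  rw [hG, hG]
  set c : Equiv.Perm (Fin 2) := Equiv.swap 0 1 with hc
  have hsc : psgn c = -1 := by
    simp [psgn, hc, Equiv.Perm.sign_swap (by decide : (0 : Fin 2) ≠ 1)]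
  refine Fintype.sum_equiv (Equiv.mulRight c) _ _ ?_
  intro σ
  refine Fintype.sum_equiv (Equiv.mulRight c) _ _ ?_
  intro τ
  have h1 : psgn (σ * c) = psgn σ * psgn c := by
    simp [psgn]
  have h2 : psgn (τ * c) = psgn τ * psgn c := by
    simp [psgn]
  simp only [Equiv.coe_mulRight, h1, h2, hsc, Equiv.Perm.mul_apply]
  have e0 : c 0 = 1 := by simp [hc]
  have e1 : c 1 = 0 := by simp [hc, Equiv.swap_apply_right]
  rw [e0, e1]
  ring
end

section
/- Let g : Fin 2 → Fin 2 → Fin 2 → Fin 2 → ℝ be a completely symmetric 4-tensor and A : Fin 2 → Fin 2 → ℝ a matrix. Define g' i₁ i₂ i₃ i₄ = ∑_{j₁,j₂,j₃,j₄} A j₁ i₁ · A j₂ i₂ · A j₃ i₃ · A j₄ i₄ · g j₁ j₂ j₃ j₄, and for a symmetric 4-tensor h let hdet h = h 0 0 0 0 · h 1 1 1 1 − 4 · h 0 0 0 1 · h 0 1 1 1 + 3 · (h 0 0 1 1)^2. Then hdet g' = (det A)^4 · hdet g. -/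
/-- The quartic 2-dimensional Cayley hyperdeterminant of a symmetric 4-tensor. -/
def hdet4 (h : Fin 2 → Fin 2 → Fin 2 → Fin 2 → ℝ) : ℝ :=
  h 0 0 0 0 * h 1 1 1 1 - 4 * (h 0 0 0 1 * h 0 1 1 1) + 3 * (h 0 0 1 1) ^ 2

theorem stmt5 (g : Fin 2 → Fin 2 → Fin 2 → Fin 2 → ℝ)
    (hsym : ∀ i j k l, g i j k l = g j i k l ∧ g i j k l = g i k j l ∧ g i j k l = g i j l k)
    (A : Matrix (Fin 2) (Fin 2) ℝ)
    (g' : Fin 2 → Fin 2 → Fin 2 → Fin 2 → ℝ)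
    (hg' : ∀ i₁ i₂ i₃ i₄, g' i₁ i₂ i₃ i₄ =
      ∑ j₁, ∑ j₂, ∑ j₃, ∑ j₄, A j₁ i₁ * A j₂ i₂ * A j₃ i₃ * A j₄ i₄ * g j₁ j₂ j₃ j₄) :
    hdet4 g' = A.det ^ 4 * hdet4 g := by
  have s12 : ∀ i j k l, g i j k l = g j i k l := fun i j k l => (hsym i j k l).1
  have s23 : ∀ i j k l, g i j k l = g i k j l := fun i j k l => (hsym i j k l).2.1
  have s34 : ∀ i j k l, g i j k l = g i j l k := fun i j k l => (hsym i j k l).2.2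
  have e1 : g 0 0 1 0 = g 0 0 0 1 := s34 0 0 1 0
  have e2 : g 0 1 0 0 = g 0 0 0 1 := (s23 0 1 0 0).trans e1
  have e3 : g 1 0 0 0 = g 0 0 0 1 := (s12 1 0 0 0).trans e2
  have f1 : g 0 1 0 1 = g 0 0 1 1 := s23 0 1 0 1
  have f2 : g 0 1 1 0 = g 0 0 1 1 := (s34 0 1 1 0).trans f1
  have f3 : g 1 0 0 1 = g 0 0 1 1 := (s12 1 0 0 1).trans f1
  have f4 : g 1 0 1 0 = g 0 0 1 1 := (s12 1 0 1 0).trans f2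
  have f5 : g 1 1 0 0 = g 0 0 1 1 := (s23 1 1 0 0).trans f4
  have h1 : g 1 0 1 1 = g 0 1 1 1 := s12 1 0 1 1
  have h2 : g 1 1 0 1 = g 0 1 1 1 := (s23 1 1 0 1).trans h1
  have h3 : g 1 1 1 0 = g 0 1 1 1 := (s34 1 1 1 0).trans h2
  simp only [hdet4, hg', Fin.sum_univ_two, Matrix.det_fin_two, e1, e2, e3, f1, f2, f3, f4, f5,
    h1, h2, h3]
  ring
end

section
/- Let g : Fin 2 → Fin 2 → Fin 2 → Fin 2 → ℝ be a completely symmetric 4-tensor and A : Fin 2 → Fin 2 → ℝ a matrix with det A > 0, and let g' be the pullback of g along A (g' i₁ i₂ i₃ i₄ = ∑ A j₁ i₁ · A j₂ i₂ · A j₃ i₃ · A j₄ i₄ · g j₁ j₂ j₃ j₄). With hdet as the quartic 2-dimensional hyperdeterminant (hdet h = h₀₀₀₀ h₁₁₁₁ − 4 h₀₀₀₁ h₀₁₁₁ + 3 h₀₀₁₁²), we have |hdet g'|^(1/4) = |hdet g|^(1/4) · det A. -/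
theorem stmt6 (g : Fin 2 → Fin 2 → Fin 2 → Fin 2 → ℝ)
    (hsym : ∀ i j k l, g i j k l = g j i k l ∧ g i j k l = g i k j l ∧ g i j k l = g i j l k)
    (A : Matrix (Fin 2) (Fin 2) ℝ) (hA : 0 < A.det)
    (g' : Fin 2 → Fin 2 → Fin 2 → Fin 2 → ℝ)
    (hg' : ∀ i₁ i₂ i₃ i₄, g' i₁ i₂ i₃ i₄ =
      ∑ j₁, ∑ j₂, ∑ j₃, ∑ j₄, A j₁ i₁ * A j₂ i₂ * A j₃ i₃ * A j₄ i₄ * g j₁ j₂ j₃ j₄) :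
    |hdet4 g'| ^ ((1 : ℝ) / 4) = |hdet4 g| ^ ((1 : ℝ) / 4) * A.det := by
  have s12 : ∀ i j k l, g i j k l = g j i k l := fun i j k l => (hsym i j k l).1
  have s23 : ∀ i j k l, g i j k l = g i k j l := fun i j k l => (hsym i j k l).2.1
  have s34 : ∀ i j k l, g i j k l = g i j l k := fun i j k l => (hsym i j k l).2.2
  have e0010 : g 0 0 1 0 = g 0 0 0 1 := (s34 0 0 0 1).symm
  have e0100 : g 0 1 0 0 = g 0 0 0 1 := (s23 0 0 1 0).symm.trans e0010
  have e1000 : g 1 0 0 0 = g 0 0 0 1 := (s12 0 1 0 0).symm.trans e0100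
  have e0101 : g 0 1 0 1 = g 0 0 1 1 := (s23 0 0 1 1).symm
  have e1001 : g 1 0 0 1 = g 0 0 1 1 := (s12 0 1 0 1).symm.trans e0101
  have e0110 : g 0 1 1 0 = g 0 0 1 1 := (s34 0 1 0 1).symm.trans e0101
  have e1010 : g 1 0 1 0 = g 0 0 1 1 := (s12 0 1 1 0).symm.trans e0110
  have e1100 : g 1 1 0 0 = g 0 0 1 1 := (s23 1 0 1 0).symm.trans e1010
  have e1011 : g 1 0 1 1 = g 0 1 1 1 := (s12 0 1 1 1).symm
  have e1101 : g 1 1 0 1 = g 0 1 1 1 := (s23 1 0 1 1).symm.trans e1011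
  have e1110 : g 1 1 1 0 = g 0 1 1 1 := (s34 1 1 0 1).symm.trans e1101
  have key : hdet4 g' = A.det ^ 4 * hdet4 g := by
    simp only [hdet4, hg', Fin.sum_univ_two, Matrix.det_fin_two,
      e0010, e0100, e1000, e0101, e1001, e0110, e1010, e1100, e1011, e1101, e1110]
    ring
  rw [key, abs_mul, abs_pow, abs_of_pos hA, Real.mul_rpow (by positivity) (abs_nonneg _),
    mul_comm]
  congr 1
  rw [← Real.rpow_natCast (A.det) 4, ← Real.rpow_mul hA.le]
  norm_num
end

section
/- Let g : Fin 2 → Fin 2 → Fin 2 → ℝ be a completely symmetric 3-tensor, write a = g 0 0 0, b = g 0 0 1, c = g 0 1 1, d = g 1 1 1. Define G i j = ∑_{σ,τ ∈ S₂} sign σ · sign τ · g i (σ 0) (τ 0) · g j (σ 1) (τ 1). Then det G (as a 2×2 matrix) equals −(a d)² + 6 a b c d − 4 a c³ − 4 b³ d + 3 (b c)². -/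
theorem stmt7 (g : Fin 2 → Fin 2 → Fin 2 → ℝ)
    (hsym : ∀ i j k, g i j k = g j i k ∧ g i j k = g i k j)
    (a b c d : ℝ) (ha : a = g 0 0 0) (hb : b = g 0 0 1) (hc : c = g 0 1 1) (hd : d = g 1 1 1)
    (G : Matrix (Fin 2) (Fin 2) ℝ)
    (hG : ∀ i j, G i j =
      ∑ σ : Equiv.Perm (Fin 2), ∑ τ : Equiv.Perm (Fin 2),
        psgn σ * psgn τ * (g i (σ 0) (τ 0) * g j (σ 1) (τ 1))) :
    G.det = -(a * d) ^ 2 + 6 * (a * b * c * d) - 4 * (a * c ^ 3) - 4 * (b ^ 3 * d)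
      + 3 * (b * c) ^ 2 := by
  have huniv : (Finset.univ : Finset (Equiv.Perm (Fin 2))) = {1, Equiv.swap 0 1} := by
    decide
  have h010 : g 0 1 0 = b := by rw [hb, (hsym 0 1 0).2]
  have h100 : g 1 0 0 = b := by rw [(hsym 1 0 0).1, h010]
  have h101 : g 1 0 1 = c := by rw [hc, (hsym 1 0 1).1]
  have h110 : g 1 1 0 = c := by rw [(hsym 1 1 0).2, h101]
  rw [Matrix.det_fin_two, hG, hG, hG, hG, huniv]
  rw [Finset.sum_pair (by decide : (1:Equiv.Perm (Fin 2)) ≠ Equiv.swap 0 1),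
    Finset.sum_pair (by decide : (1:Equiv.Perm (Fin 2)) ≠ Equiv.swap 0 1),
    Finset.sum_pair (by decide : (1:Equiv.Perm (Fin 2)) ≠ Equiv.swap 0 1),
    Finset.sum_pair (by decide : (1:Equiv.Perm (Fin 2)) ≠ Equiv.swap 0 1),
    Finset.sum_pair (by decide : (1:Equiv.Perm (Fin 2)) ≠ Equiv.swap 0 1),
    Finset.sum_pair (by decide : (1:Equiv.Perm (Fin 2)) ≠ Equiv.swap 0 1),
    Finset.sum_pair (by decide : (1:Equiv.Perm (Fin 2)) ≠ Equiv.swap 0 1),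
    Finset.sum_pair (by decide : (1:Equiv.Perm (Fin 2)) ≠ Equiv.swap 0 1),
    Finset.sum_pair (by decide : (1:Equiv.Perm (Fin 2)) ≠ Equiv.swap 0 1),
    Finset.sum_pair (by decide : (1:Equiv.Perm (Fin 2)) ≠ Equiv.swap 0 1),
    Finset.sum_pair (by decide : (1:Equiv.Perm (Fin 2)) ≠ Equiv.swap 0 1),
    Finset.sum_pair (by decide : (1:Equiv.Perm (Fin 2)) ≠ Equiv.swap 0 1)]
  simp [psgn, Equiv.swap_apply_left, Equiv.swap_apply_right,
    Equiv.Perm.sign_swap (by decide : (0:Fin 2) ≠ 1),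
    ha, hb, hc, hd, h010, h100, h101, h110]
  ring
end

section
/- Let g : Fin 2 → Fin 2 → Fin 2 → ℝ be a completely symmetric 3-tensor and A : Fin 2 → Fin 2 → ℝ a matrix. Define g' i₁ i₂ i₃ = ∑_{j₁,j₂,j₃} A j₁ i₁ · A j₂ i₂ · A j₃ i₃ · g j₁ j₂ j₃, and G' i j = ∑_{σ,τ ∈ S₂} sign σ · sign τ · g' i (σ 0) (τ 0) · g' j (σ 1) (τ 1), and similarly G from g. Then det G' = (det A)^6 · det G. -/
private lemma permsum (f : Equiv.Perm (Fin 2) → ℝ) :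
    ∑ σ, f σ = f 1 + f (Equiv.swap 0 1) := by
  have h : (Finset.univ : Finset (Equiv.Perm (Fin 2))) = {1, Equiv.swap 0 1} := by decide
  rw [h, Finset.sum_insert (by decide), Finset.sum_singleton]

private lemma psgn_one : psgn (1 : Equiv.Perm (Fin 2)) = 1 := by simp [psgn]

private lemma psgn_swap : psgn (Equiv.swap (0 : Fin 2) 1) = -1 := by
  simp [psgn, Equiv.Perm.sign_swap (by decide : (0 : Fin 2) ≠ 1)]

theorem stmt8 (g : Fin 2 → Fin 2 → Fin 2 → ℝ)
    (hsym : ∀ i j k, g i j k = g j i k ∧ g i j k = g i k j)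
    (A : Matrix (Fin 2) (Fin 2) ℝ)
    (g' : Fin 2 → Fin 2 → Fin 2 → ℝ)
    (hg' : ∀ i₁ i₂ i₃, g' i₁ i₂ i₃ = ∑ j₁, ∑ j₂, ∑ j₃, A j₁ i₁ * A j₂ i₂ * A j₃ i₃ * g j₁ j₂ j₃)
    (G G' : Matrix (Fin 2) (Fin 2) ℝ)
    (hG : ∀ i j, G i j =
      ∑ σ : Equiv.Perm (Fin 2), ∑ τ : Equiv.Perm (Fin 2),
        psgn σ * psgn τ * (g i (σ 0) (τ 0) * g j (σ 1) (τ 1)))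
    (hG' : ∀ i j, G' i j =
      ∑ σ : Equiv.Perm (Fin 2), ∑ τ : Equiv.Perm (Fin 2),
        psgn σ * psgn τ * (g' i (σ 0) (τ 0) * g' j (σ 1) (τ 1))) :
    G'.det = A.det ^ 6 * G.det := by
  have h1 : g 0 1 0 = g 0 0 1 := (hsym 0 1 0).2
  have h2 : g 1 0 0 = g 0 0 1 := ((hsym 1 0 0).1).trans h1
  have h3 : g 1 0 1 = g 0 1 1 := (hsym 1 0 1).1
  have h4 : g 1 1 0 = g 0 1 1 := ((hsym 1 1 0).2).trans h3
  have key : ∀ i j, G' i j = A.det ^ 2 * (∑ k, ∑ l, A k i * A l j * G k l) := by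
    intro i j
    fin_cases i <;> fin_cases j <;>
      simp only [hG', hG, hg', permsum, psgn_one, psgn_swap, Fin.sum_univ_two,
        Matrix.det_fin_two, Equiv.Perm.one_apply, Equiv.swap_apply_left,
        Equiv.swap_apply_right, Fin.isValue, h1, h2, h3, h4] <;> ring
  simp only [Matrix.det_fin_two, key, Fin.sum_univ_two]
  ring
end

section
/- Let g : Fin 2 → Fin 2 → Fin 2 → Fin 2 → ℝ be a completely symmetric 4-tensor and define G i j = ∑_{σ,τ,ρ ∈ S₂} sign σ · sign τ · sign ρ · g i (σ 0) (τ 0) (ρ 0) · g j (σ 1) (τ 1) (ρ 1). Then G is antisymmetric (G i j = −G j i) and the scalar ∑_{π ∈ S₂} sign π · G (π 0) (π 1) equals 2 · G 0 1 = 2 · hdet g, where hdet g = g₀₀₀₀ g₁₁₁₁ − 4 g₀₀₀₁ g₀₁₁₁ + 3 g₀₀₁₁². -/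
lemma sum_perm2 (f : Equiv.Perm (Fin 2) → ℝ) :
    ∑ σ : Equiv.Perm (Fin 2), f σ = f 1 + f (Equiv.swap 0 1) := by
  have h : (Finset.univ : Finset (Equiv.Perm (Fin 2))) = {1, Equiv.swap 0 1} := by decide
  rw [h, Finset.sum_insert (by decide), Finset.sum_singleton]

theorem stmt10 (g : Fin 2 → Fin 2 → Fin 2 → Fin 2 → ℝ)
    (hsym : ∀ i j k l, g i j k l = g j i k l ∧ g i j k l = g i k j l ∧ g i j k l = g i j l k)
    (G : Fin 2 → Fin 2 → ℝ)
    (hG : ∀ i j, G i j =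
      ∑ σ : Equiv.Perm (Fin 2), ∑ τ : Equiv.Perm (Fin 2), ∑ ρ : Equiv.Perm (Fin 2),
        psgn σ * psgn τ * psgn ρ * (g i (σ 0) (τ 0) (ρ 0) * g j (σ 1) (τ 1) (ρ 1))) :
    (∀ i j, G i j = -G j i) ∧
    (∑ π : Equiv.Perm (Fin 2), psgn π * G (π 0) (π 1)) = 2 * G 0 1 ∧
    G 0 1 = hdet4 g := by
  have s1 : psgn (1 : Equiv.Perm (Fin 2)) = 1 := by simp [psgn]
  have s2 : psgn (Equiv.swap (0 : Fin 2) 1) = -1 := by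
    simp [psgn, Equiv.Perm.sign_swap (by decide : (0 : Fin 2) ≠ 1)]
  have e1 : ((1 : Equiv.Perm (Fin 2)) 0, (1 : Equiv.Perm (Fin 2)) 1) = (0, 1) := rfl
  have e2 : (Equiv.swap (0 : Fin 2) 1 0, Equiv.swap (0 : Fin 2) 1 1) = (1, 0) := by
    simp
  have hGij : ∀ i j, G i j =
      g i 0 0 0 * g j 1 1 1 - g i 0 0 1 * g j 1 1 0 - g i 0 1 0 * g j 1 0 1
      + g i 0 1 1 * g j 1 0 0 - g i 1 0 0 * g j 0 1 1 + g i 1 0 1 * g j 0 1 0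
      + g i 1 1 0 * g j 0 0 1 - g i 1 1 1 * g j 0 0 0 := by
    intro i j
    rw [hG i j, sum_perm2]
    simp only [sum_perm2, s1, s2, Equiv.Perm.one_apply,
      Equiv.swap_apply_left, Equiv.swap_apply_right]
    ring
  have hanti : ∀ i j, G i j = -G j i := by
    intro i j; rw [hGij i j, hGij j i]; ring
  refine ⟨hanti, ?_, ?_⟩
  · rw [sum_perm2 (fun π => psgn π * G (π 0) (π 1))]
    simp only [s1, s2, Equiv.Perm.one_apply, Equiv.swap_apply_left, Equiv.swap_apply_right]
    rw [hanti 1 0]; ring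
  · have h1 : ∀ i j k l, g i j k l = g j i k l := fun i j k l => (hsym i j k l).1
    have h2 : ∀ i j k l, g i j k l = g i k j l := fun i j k l => (hsym i j k l).2.1
    have h3 : ∀ i j k l, g i j k l = g i j l k := fun i j k l => (hsym i j k l).2.2
    have a1 : g 1 1 1 0 = g 0 1 1 1 := by rw [h3, h2, h1]
    have a2 : g 0 0 1 0 = g 0 0 0 1 := by rw [h3]
    have a3 : g 1 1 0 1 = g 0 1 1 1 := by rw [h2, h1]
    have a4 : g 1 1 0 0 = g 0 0 1 1 := by rw [h2, h1, h3, h2]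
    have a5 : g 0 1 0 0 = g 0 0 0 1 := by rw [h2, h3]
    have a6 : g 1 0 1 1 = g 0 1 1 1 := by rw [h1]
    have a7 : g 0 1 0 1 = g 0 0 1 1 := by rw [h2]
    have a8 : g 1 0 1 0 = g 0 0 1 1 := by rw [h1, h2, h3, h2]
    have a9 : g 0 1 1 0 = g 0 0 1 1 := by rw [h3 0 1 1 0, h2 0 1 0 1]
    have a10 : g 1 0 0 1 = g 0 0 1 1 := by rw [h1 1 0 0 1, h2 0 1 0 1]
    have a11 : g 1 0 0 0 = g 0 0 0 1 := by rw [h1 1 0 0 0, h3 0 1 0 0, h2 0 1 0 0, h3 0 0 1 0]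
    rw [hGij 0 1, a1, a2, a3, a4, a5, a6, a7, a8, a9, a10, a11, hdet4]
    ring
end
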